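/- The probability that in every one of the 0.998B middle levels, at most q/16 of the q/8 sampled blocks have dominance vectors independent of all previous ones, is at most ((3√(kq)/(n²/4A))^{q/16}·2^{q/8})^{0.998B} ≤ (200·β^{−1/2}·log n)^{0.998·B·q/16} ≤ 2^{−0.031·q·log k}, for sufficiently large n. -/

import Mathlib

open Finset in
private lemma sum_biUnion_le' {α β : Type*} [DecidableEq α] [DecidableEq β] (s : Finset α)
    (f : α → Finset β) (g : β → ℝ) (hg : ∀ b, 0 ≤ g b) :
    ∑ b ∈ s.biUnion f, g b ≤ ∑ a ∈ s, ∑ b ∈ f a, g b := by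
  induction s using Finset.induction_on with
  | empty => simp
  | @insert a s ha ih =>
    rw [Finset.biUnion_insert, Finset.sum_insert ha]
    have h := Finset.sum_union_inter (s₁ := f a) (s₂ := s.biUnion f) (f := g)
    have h2 : 0 ≤ ∑ b ∈ f a ∩ s.biUnion f, g b := Finset.sum_nonneg fun b _ => hg b
    linarith

open Classical Finset in
private lemma chain_bound {L M : ℕ} {Ω : Type} [Fintype Ω] (μ : Ω → ℝ)
    (Fail : Fin L × Fin M → Finset Ω) (ε : ℝ) (hε : 0 ≤ ε)
    (hμ1 : ∑ ω, μ ω = 1)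
    (hcond : ∀ p : Fin L × Fin M, ∀ S : Finset (Fin L × Fin M),
      (∀ r ∈ S, r.1 < p.1 ∨ (r.1 = p.1 ∧ r.2 < p.2)) →
      ∑ ω ∈ univ.filter (fun ω => ω ∈ Fail p ∧ ∀ r ∈ S, ω ∈ Fail r), μ ω ≤
        ε * ∑ ω ∈ univ.filter (fun ω => ∀ r ∈ S, ω ∈ Fail r), μ ω)
    (S : Finset (Fin L × Fin M)) :
    ∑ ω ∈ univ.filter (fun ω => ∀ r ∈ S, ω ∈ Fail r), μ ω ≤ ε ^ S.card := by
  induction S using Finset.strongInduction with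
  | _ S ih =>
    rcases S.eq_empty_or_nonempty with rfl | hS
    · simp [hμ1]
    · obtain ⟨p, hp, hmax⟩ := S.exists_max_image (fun r => r.1.val * M + r.2.val) hS
      have hlex : ∀ r ∈ S.erase p, r.1 < p.1 ∨ (r.1 = p.1 ∧ r.2 < p.2) := by
        intro r hr
        obtain ⟨hne, hrS⟩ := Finset.mem_erase.mp hr
        have h1 := hmax r hrS
        have h2 : r.2.val < M := r.2.isLt
        have h3 : p.2.val < M := p.2.isLt
        rcases lt_trichotomy r.1.val p.1.val with h | h | h
        · exact Or.inl h
        · refine Or.inr ⟨Fin.ext h, ?_⟩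
          rw [h] at h1
          have h4 : r.2.val ≤ p.2.val := by omega
          have h5 : r.2.val ≠ p.2.val := by
            intro hv; exact hne (Prod.ext (Fin.ext h) (Fin.ext hv))
          exact Fin.lt_def.mpr (lt_of_le_of_ne h4 h5)
        · exfalso
          have h6 : (p.1.val + 1) * M ≤ r.1.val * M := Nat.mul_le_mul_right M h
          rw [add_mul, one_mul] at h6
          linarith
      have hcard := Finset.card_erase_of_mem hp
      have hset : univ.filter (fun ω => ∀ r ∈ S, ω ∈ Fail r) =
          univ.filter (fun ω => ω ∈ Fail p ∧ ∀ r ∈ S.erase p, ω ∈ Fail r) := by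
        ext ω
        simp only [mem_filter, mem_univ, true_and, Finset.mem_erase]
        constructor
        · intro h; exact ⟨h p hp, fun r hr => h r hr.2⟩
        · rintro ⟨h1, h2⟩ r hr
          by_cases hrp : r = p
          · subst hrp; exact h1
          · exact h2 r ⟨hrp, hr⟩
      rw [hset]
      have ih' := ih (S.erase p) (Finset.erase_ssubset hp)
      have hpos : 1 ≤ S.card := Finset.card_pos.mpr hS
      calc ∑ ω ∈ univ.filter (fun ω => ω ∈ Fail p ∧ ∀ r ∈ S.erase p, ω ∈ Fail r), μ ω
          ≤ ε * ∑ ω ∈ univ.filter (fun ω => ∀ r ∈ S.erase p, ω ∈ Fail r), μ ω :=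
            hcond p (S.erase p) hlex
        _ ≤ ε * ε ^ (S.erase p).card := mul_le_mul_of_nonneg_left ih' hε
        _ = ε ^ S.card := by
            rw [hcard, ← pow_succ']
            congr 1
            omega

set_option maxHeartbeats 1000000 in
open Classical Real Finset in
/-- Probability that every sampled hitting pattern yields few new independent
constraints.  In each of the `L ≥ 0.998·B` middle levels, `q/8` blocks are
sampled one by one; each sampled block's dominance vector is linearly
independent from all previously collected vectors except with (conditional)
probability at most `ε = 3√(kq)/(n²/4A)`.  The probability that in *every* level
at most `q/16` of the `q/8` sampled blocks are independent (i.e. at least `q/16`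
fail) is at most `(ε^{q/16}·2^{q/8})^L ≤ (200·β^{−1/2}·log n)^{0.998·B·q/16}
≤ 2^{−0.031·q·log k}`, where `β = k/q`. -/
theorem stmt18 :
    ∃ N : ℕ, ∀ n ≥ N, ∀ k q A B L : ℕ,
      16 ∣ q → 1 ≤ q → Real.sqrt n ≤ (k : ℝ) →
      (q : ℝ) * (Real.logb 2 n) ^ 999 ≤ (k : ℝ) →
      (k : ℝ) ≤ (q : ℝ) * (Real.logb 2 n) ^ 1001 →
      3.9 * (n : ℝ) ^ 2 * Real.logb 2 n / (k : ℝ) ≤ (A : ℝ) →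
      (A : ℝ) ≤ 4.1 * (n : ℝ) ^ 2 * Real.logb 2 n / (k : ℝ) →
      0.999 * Real.logb 2 k / (997 * Real.logb 2 (Real.logb 2 n)) ≤ (B : ℝ) →
      (B : ℝ) ≤ 1.001 * Real.logb 2 k / (997 * Real.logb 2 (Real.logb 2 n)) →
      0.998 * (B : ℝ) ≤ (L : ℝ) →
      ∀ (Ω : Type) [Fintype Ω] (μ : Ω → ℝ)
        (Fail : Fin L × Fin (q / 8) → Finset Ω),
      (∀ ω, 0 ≤ μ ω) → (∑ ω, μ ω = 1) →
      -- conditional failure probability at most ε given any earlier failures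
      (∀ p : Fin L × Fin (q / 8), ∀ S : Finset (Fin L × Fin (q / 8)),
        (∀ r ∈ S, r.1 < p.1 ∨ (r.1 = p.1 ∧ r.2 < p.2)) →
        ∑ ω ∈ Finset.univ.filter (fun ω => ω ∈ Fail p ∧ ∀ r ∈ S, ω ∈ Fail r), μ ω ≤
          (3 * Real.sqrt ((k : ℝ) * q) / ((n : ℝ) ^ 2 / (4 * A))) *
            ∑ ω ∈ Finset.univ.filter (fun ω => ∀ r ∈ S, ω ∈ Fail r), μ ω) →
      (∑ ω ∈ Finset.univ.filter (fun ω => ∀ ℓ : Fin L,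
          (q : ℝ) / 16 ≤
            ((Finset.univ.filter (fun s : Fin (q / 8) => ω ∈ Fail (ℓ, s))).card : ℝ)),
          μ ω ≤
        ((3 * Real.sqrt ((k : ℝ) * q) / ((n : ℝ) ^ 2 / (4 * A))) ^ ((q : ℝ) / 16)
          * 2 ^ ((q : ℝ) / 8)) ^ L)
      ∧ (((3 * Real.sqrt ((k : ℝ) * q) / ((n : ℝ) ^ 2 / (4 * A))) ^ ((q : ℝ) / 16)
            * 2 ^ ((q : ℝ) / 8)) ^ L ≤
          (200 * ((k : ℝ) / q) ^ (-(1 / 2 : ℝ)) * Real.logb 2 n) ^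
            (0.998 * (B : ℝ) * (q : ℝ) / 16))
      ∧ ((200 * ((k : ℝ) / q) ^ (-(1 / 2 : ℝ)) * Real.logb 2 n) ^
            (0.998 * (B : ℝ) * (q : ℝ) / 16) ≤
          (2 : ℝ) ^ (-(0.031 : ℝ) * q * Real.logb 2 k)) := by
  refine ⟨2 ^ 65536, ?_⟩
  intro n hn k q A B L hdvd hq1 hsqn hkq hkq' hA1 hA2 hB1 hB2 hL Ω _ μ Fail hμ0 hμ1 hcond
  -- basic positivity facts
  have hn' : (2:ℝ) ^ (65536:ℕ) ≤ (n:ℝ) := by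
    have h := Nat.cast_le (α := ℝ) |>.mpr hn
    rwa [Nat.cast_pow, Nat.cast_ofNat] at h
  have hn1 : (1:ℝ) ≤ (n:ℝ) := by
    have : 1 ≤ n := le_trans (Nat.one_le_two_pow) hn
    exact_mod_cast this
  have hn0 : (0:ℝ) < n := lt_of_lt_of_le one_pos hn1
  set Ln := Real.logb 2 n with hLndef
  have hlog2pow : ∀ j : ℕ, Real.logb 2 ((2:ℝ) ^ j) = j := by
    intro j
    rw [← Real.rpow_natCast 2 j, Real.logb_rpow (by norm_num) (by norm_num)]
  have hLn : ((65536:ℕ):ℝ) ≤ Ln := by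
    have := Real.logb_le_logb_of_le (one_lt_two)
      (pow_pos (by norm_num : (0:ℝ) < 2) 65536) hn'
    rwa [hlog2pow 65536] at this
  clear hn hn'
  have hLn1 : (1:ℝ) ≤ Ln := by
    have : (1:ℝ) ≤ ((65536:ℕ):ℝ) := by norm_num
    linarith
  have hLn0 : (0:ℝ) < Ln := by linarith
  have hLn' : (65536:ℝ) ≤ Ln := by exact_mod_cast hLn
  clear hLn
  set ℓℓ := Real.logb 2 Ln with hlldef
  have hll : (16:ℝ) ≤ ℓℓ := by
    have h0 := Real.logb_le_logb_of_le (one_lt_two) (pow_pos (by norm_num : (0:ℝ) < 2) 16)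
      (by norm_num; linarith : (2:ℝ) ^ (16:ℕ) ≤ Ln)
    rw [hlog2pow 16] at h0
    rw [hlldef]
    calc (16:ℝ) = ((16:ℕ):ℝ) := by norm_num
      _ ≤ _ := h0
  have hll0 : (0:ℝ) < ℓℓ := by linarith
  have hq0 : (0:ℝ) < q := by exact_mod_cast hq1
  have hk1 : (1:ℝ) ≤ k := by
    have h2 := Real.sqrt_le_sqrt hn1
    rw [Real.sqrt_one] at h2
    linarith
  have hk0 : (0:ℝ) < k := by linarith
  set Lk := Real.logb 2 k with hLkdef
  have hLk0 : (0:ℝ) ≤ Lk := Real.logb_nonneg one_lt_two hk1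
  have hA0 : (0:ℝ) < A := by
    have : (0:ℝ) < 3.9 * (n:ℝ)^2 * Ln / k := by positivity
    linarith
  have hA2' : (A:ℝ) * k ≤ 4.1 * (n:ℝ)^2 * Ln := (le_div_iff₀ hk0).mp hA2
  have hB1' : 0.999 * Lk ≤ (B:ℝ) * (997 * ℓℓ) :=
    (div_le_iff₀ (by positivity)).mp hB1
  -- s = sqrt(q/k)
  set s := Real.sqrt ((q:ℝ)/k) with hsdef
  have hs0 : (0:ℝ) < s := Real.sqrt_pos.mpr (by positivity)
  have hs2 : s^2 = (q:ℝ)/k := Real.sq_sqrt (by positivity)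
  have hsqrtkq : Real.sqrt ((k:ℝ) * q) = k * s := by
    have h1 : (k:ℝ) * q = k^2 * ((q:ℝ)/k) := by field_simp
    rw [h1, Real.sqrt_mul (by positivity), Real.sqrt_sq hk0.le]
  set ε := 3 * Real.sqrt ((k : ℝ) * q) / ((n : ℝ) ^ 2 / (4 * A)) with hεdef
  have hεeq : ε = 12 * A * k * s / (n:ℝ)^2 := by
    rw [hεdef, hsqrtkq]
    field_simp
    ring
  have hε0 : (0:ℝ) ≤ ε := by rw [hεeq]; positivity
  set bb := 200 * s * Ln with hbbdef
  have hbb0 : (0:ℝ) < bb := by positivity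
  have hbase : 200 * ((k:ℝ)/q) ^ (-(1/2:ℝ)) * Ln = bb := by
    have h1 : ((k:ℝ)/q) ^ (-(1/2:ℝ)) = s := by
      rw [Real.rpow_neg (by positivity), ← Real.sqrt_eq_rpow, ← Real.sqrt_inv, inv_div]
    rw [h1]
  have hε50 : ε ≤ 50 * s * Ln := by
    rw [hεeq, div_le_iff₀ (by positivity : (0:ℝ) < (n:ℝ)^2)]
    have hint1 := mul_le_mul_of_nonneg_left hA2' (show (0:ℝ) ≤ 12 * s by positivity)
    have hint2 : (0:ℝ) ≤ s * Ln * (n:ℝ)^2 := by positivity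
    linarith [hint1, hint2]
  have h4ε : 4 * ε ≤ bb := by rw [hbbdef]; linarith
  have hbb1 : bb ≤ 1 := by
    have h997b : (40000:ℝ) ≤ Ln ^ 997 :=
      le_trans (by linarith) (le_self_pow₀ hLn1 (by norm_num))
    have h1 : (40000:ℝ) * Ln^2 ≤ Ln^997 * Ln^2 :=
      mul_le_mul_of_nonneg_right h997b (sq_nonneg Ln)
    have hpow : (40000:ℝ) * q * Ln^2 ≤ k := by
      have h1' := mul_le_mul_of_nonneg_left h1 hq0.le
      have h1'' : (q:ℝ) * (Ln^997 * Ln^2) = q * Ln^999 := by ring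
      rw [h1''] at h1'
      linarith [hkq, h1']
    have hbbsq : bb^2 ≤ 1 := by
      have h2 : bb^2 = 40000 * ((q:ℝ)/k) * Ln^2 := by rw [hbbdef, ← hs2]; ring
      have h3 : (40000:ℝ) * ((q:ℝ)/k) * Ln^2 = (40000 * q * Ln^2) / k := by ring
      rw [h2, h3]
      exact (div_le_one hk0).mpr hpow
    exact (pow_le_one_iff_of_nonneg hbb0.le (by norm_num : (2:ℕ) ≠ 0)).mp hbbsq
  -- m = q/16
  have hqm : q = 16 * (q / 16) := (Nat.mul_div_cancel' hdvd).symm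
  set m := q / 16 with hmdef
  have hM : q / 8 = 2 * m := by omega
  have hqR : (q:ℝ) = 16 * m := by exact_mod_cast congrArg (Nat.cast (R := ℝ)) hqm
  have h16 : (q:ℝ) / 16 = ((m:ℕ):ℝ) := by rw [hqR]; ring
  have h8 : (q:ℝ) / 8 = ((2*m:ℕ):ℝ) := by push_cast; rw [hqR]; ring
  have hrw : (ε ^ ((q:ℝ)/16) * (2:ℝ) ^ ((q:ℝ)/8)) ^ L = (ε ^ m * (2:ℝ) ^ (2*m)) ^ L := by
    rw [h16, h8, Real.rpow_natCast, Real.rpow_natCast]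
  refine ⟨?_, ?_, ?_⟩
  · -- Part 1
    rw [hrw]
    set Tset : Finset (Fin L → Finset (Fin (q/8))) :=
      univ.filter (fun t => ∀ ℓ, (t ℓ).card = m) with hTset
    set Aset : (Fin L → Finset (Fin (q/8))) → Finset Ω :=
      fun t => univ.filter (fun ω => ∀ r : Fin L × Fin (q/8), r.2 ∈ t r.1 → ω ∈ Fail r)
      with hAset
    have hsub : (univ.filter (fun ω => ∀ ℓ : Fin L,
        (q:ℝ)/16 ≤ ((univ.filter (fun sx : Fin (q/8) => ω ∈ Fail (ℓ, sx))).card : ℝ)))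
        ⊆ Tset.biUnion Aset := by
      intro ω hω
      simp only [mem_filter, mem_univ, true_and] at hω
      have hchoice : ∀ ℓ : Fin L, ∃ u : Finset (Fin (q/8)),
          u ⊆ univ.filter (fun sx => ω ∈ Fail (ℓ, sx)) ∧ u.card = m := by
        intro ℓ
        have h := hω ℓ
        rw [h16] at h
        exact Finset.exists_subset_card_eq (by exact_mod_cast h)
      choose t ht1 ht2 using hchoice
      rw [Finset.mem_biUnion]
      refine ⟨t, ?_, ?_⟩
      · rw [hTset]
        simp only [mem_filter, mem_univ, true_and]
        exact ht2
      · rw [hAset]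
        simp only [mem_filter, mem_univ, true_and]
        rintro ⟨ℓ, sx⟩ hs
        have h := ht1 ℓ hs
        simp only [mem_filter, mem_univ, true_and] at h
        exact h
    have hA : ∀ t ∈ Tset, ∑ ω ∈ Aset t, μ ω ≤ ε ^ (L * m) := by
      intro t ht
      rw [hTset] at ht
      simp only [mem_filter, mem_univ, true_and] at ht
      have hAeq : Aset t = univ.filter
          (fun ω => ∀ r ∈ univ.filter (fun r : Fin L × Fin (q/8) => r.2 ∈ t r.1),
            ω ∈ Fail r) := by
        rw [hAset]
        ext ω
        simp only [mem_filter, mem_univ, true_and]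
      have hcardT : (univ.filter (fun r : Fin L × Fin (q/8) => r.2 ∈ t r.1)).card
          = L * m := by
        have heq : univ.filter (fun r : Fin L × Fin (q/8) => r.2 ∈ t r.1)
            = (univ : Finset (Fin L)).biUnion
                (fun ℓ => (t ℓ).image (fun sx => (ℓ, sx))) := by
          ext ⟨ℓ, sx⟩
          simp [Finset.mem_biUnion]
        rw [heq, Finset.card_biUnion]
        · have hcim : ∀ ℓ : Fin L, ((t ℓ).image (fun sx => (ℓ, sx))).card = m := by
            intro ℓ
            rw [Finset.card_image_of_injective _
              (fun a b h => (Prod.ext_iff.mp h).2)]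
            exact ht ℓ
          rw [Finset.sum_congr rfl (fun ℓ _ => hcim ℓ), Finset.sum_const,
            Finset.card_univ, Fintype.card_fin, smul_eq_mul]
        · intro ℓ₁ _ ℓ₂ _ hne
          simp only [Finset.disjoint_left, Finset.mem_image]
          rintro r ⟨a, ha, rfl⟩ ⟨b, hb2, hb⟩
          exact hne ((Prod.ext_iff.mp hb).1.symm)
      calc ∑ ω ∈ Aset t, μ ω
          ≤ ε ^ (univ.filter (fun r : Fin L × Fin (q/8) => r.2 ∈ t r.1)).card := by
            rw [hAeq]
            exact chain_bound μ Fail ε hε0 hμ1 hcond _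
        _ = ε ^ (L * m) := by rw [hcardT]
    have hTcard : ((Tset.card : ℕ) : ℝ) ≤ ((2:ℝ) ^ (2*m)) ^ L := by
      have h1 : Tset.card ≤ Fintype.card (Fin L → Finset (Fin (q/8))) := by
        rw [← Finset.card_univ]
        exact Finset.card_le_card (Finset.subset_univ _)
      have h2 : Fintype.card (Fin L → Finset (Fin (q/8))) = (2 ^ (q/8)) ^ L := by
        simp [Fintype.card_fun, Fintype.card_finset]
      rw [h2] at h1
      have h3 : ((2:ℕ) ^ (q/8)) ^ L = (2 ^ (2*m)) ^ L := by rw [hM]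
      have h4 := le_of_le_of_eq h1 h3
      exact_mod_cast h4
    refine le_trans (Finset.sum_le_sum_of_subset_of_nonneg hsub (fun ω _ _ => hμ0 ω)) ?_
    refine le_trans (sum_biUnion_le' _ _ _ hμ0) ?_
    refine le_trans (Finset.sum_le_sum hA) ?_
    rw [Finset.sum_const, nsmul_eq_mul]
    refine le_trans (mul_le_mul_of_nonneg_right hTcard (pow_nonneg hε0 _)) ?_
    exact le_of_eq (by ring)
  · -- Part 2
    rw [hrw, hbase]
    have hfac : (ε ^ m * (2:ℝ) ^ (2*m)) ^ L = (4*ε) ^ (m*L) := by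
      rw [show (2:ℝ)^(2*m) = 4^m by rw [pow_mul]; norm_num, ← mul_pow, ← pow_mul,
        mul_comm ε 4]
    rw [hfac, ← Real.rpow_natCast (4*ε) (m*L)]
    have h1 : (4*ε) ^ (((m*L:ℕ)):ℝ) ≤ bb ^ (((m*L:ℕ)):ℝ) :=
      Real.rpow_le_rpow (by linarith) h4ε (by positivity)
    refine le_trans h1 (Real.rpow_le_rpow_of_exponent_ge hbb0 hbb1 ?_)
    have hm0 : (0:ℝ) ≤ (m:ℝ) := by positivity
    push_cast
    rw [hqR]
    have hint := mul_le_mul_of_nonneg_left hL hm0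
    linarith [hint]
  · -- Part 3
    rw [hbase]
    set E := 0.998 * (B:ℝ) * (q:ℝ) / 16 with hEdef
    have hE0 : (0:ℝ) ≤ E := by rw [hEdef]; positivity
    have hlogbb : Real.logb 2 bb ≤ -498 * ℓℓ := by
      have hmul : Real.logb 2 bb = Real.logb 2 200 + Real.logb 2 s + Real.logb 2 Ln := by
        rw [hbbdef, Real.logb_mul (by positivity) (by positivity),
          Real.logb_mul (by positivity) (by positivity)]
      have hlogs : Real.logb 2 s = - (Real.logb 2 ((k:ℝ)/q) / 2) := by
        rw [hsdef]
        rw [Real.logb, Real.log_sqrt (by positivity)]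
        rw [show ((q:ℝ)/k) = ((k:ℝ)/q)⁻¹ by rw [inv_div], Real.log_inv]
        rw [Real.logb]
        ring
      have hkq2 : 999 * ℓℓ ≤ Real.logb 2 ((k:ℝ)/q) := by
        have h1 : Ln ^ (999:ℕ) ≤ (k:ℝ)/q := by
          rw [le_div_iff₀ hq0]
          linarith [hkq]
        have h2 := Real.logb_le_logb_of_le one_lt_two (by positivity : (0:ℝ) < Ln ^ (999:ℕ)) h1
        rwa [Real.logb_pow] at h2
      have hlog200 : Real.logb 2 200 ≤ 8 := by
        have h1 := Real.logb_le_logb_of_le one_lt_two (by norm_num : (0:ℝ) < 200)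
          (by norm_num : (200:ℝ) ≤ 2 ^ (8:ℕ))
        rwa [hlog2pow 8] at h1
      rw [hmul, hlogs]
      have : Real.logb 2 Ln = ℓℓ := rfl
      rw [this]
      linarith
    have hfinal : Real.logb 2 bb * E ≤ -(0.031:ℝ) * q * Lk := by
      have h1 : Real.logb 2 bb * E ≤ (-498 * ℓℓ) * E :=
        mul_le_mul_of_nonneg_right hlogbb hE0
      have h2 : (-498 * ℓℓ) * E ≤ -(0.031:ℝ) * q * Lk := by
        rw [hEdef]
        have hint1 := mul_le_mul_of_nonneg_left hB1' hq0.le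
        have hint2 : (0:ℝ) ≤ (q:ℝ) * Lk := mul_nonneg hq0.le hLk0
        linarith [hint1, hint2]
      linarith
    calc bb ^ E = ((2:ℝ) ^ Real.logb 2 bb) ^ E := by
          rw [Real.rpow_logb (by norm_num) (by norm_num) hbb0]
      _ = (2:ℝ) ^ (Real.logb 2 bb * E) := by rw [← Real.rpow_mul (by norm_num)]
      _ ≤ (2:ℝ) ^ (-(0.031:ℝ) * q * Lk) :=
          (Real.rpow_le_rpow_left_iff one_lt_two).mpr hfinal
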